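/- For every t ∈ (0,1) the three series η(t) = Σ_{i=1}^∞ X₁(t)X₂(t)⋯X_i(t), ζ(t) = Σ_{i=1}^∞ X₁(t)²X₂(t)²⋯X_i(t)², and θ(t) = Σ_{i=1}^∞ Σ_{j=1}^{i} X₁(t)³⋯X_j(t)³ X_{j+1}(t)²⋯X_i(t)² converge; moreover η and ζ are differentiable on (0,1) and satisfy η'(t) = (η(t)² + ζ(t))/(2t) and ζ'(t) = 2θ(t)/t for all t ∈ (0,1). -/

import Mathlib

open MeasureTheory Real

/-- `X1 t = (1 - log t)⁻¹`, the first iterated logarithm. -/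
noncomputable def X1 (t : ℝ) : ℝ := (1 - Real.log t)⁻¹

/-- `Xi i` is the paper's `X_i` for `i ≥ 1` (`Xi 0` is the identity placeholder);
`X_i = X_1 ∘ X_{i-1}`. -/
noncomputable def Xi : ℕ → ℝ → ℝ
  | 0, t => t
  | n+1, t => X1 (Xi n t)


/-- The general term of the series `η(t) = Σ_{i≥1} X₁(t)⋯X_i(t)`
(Lean index `i` corresponds to the paper's `i+1`). -/
noncomputable def etaTerm (t : ℝ) (i : ℕ) : ℝ := ∏ j ∈ Finset.range (i+1), Xi (j+1) t

/-- The general term of the series `ζ(t) = Σ_{i≥1} X₁²(t)⋯X_i²(t)`. -/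
noncomputable def zetaTerm (t : ℝ) (i : ℕ) : ℝ := ∏ j ∈ Finset.range (i+1), (Xi (j+1) t)^2

/-- The general term of the series
`θ(t) = Σ_{i≥1} Σ_{j=1}^i X₁³⋯X_j³ X_{j+1}²⋯X_i²`. -/
noncomputable def thetaTerm (t : ℝ) (i : ℕ) : ℝ :=
  ∑ j ∈ Finset.range (i+1),
    (∏ l ∈ Finset.range (j+1), (Xi (l+1) t)^3) *
    (∏ l ∈ Finset.Ico (j+1) (i+1), (Xi (l+1) t)^2)

noncomputable def eta (t : ℝ) : ℝ := ∑' i : ℕ, etaTerm t i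
noncomputable def zeta (t : ℝ) : ℝ := ∑' i : ℕ, zetaTerm t i
noncomputable def theta (t : ℝ) : ℝ := ∑' i : ℕ, thetaTerm t i

/-! ### Auxiliary lemmas -/

section Aux

lemma Xi_mem {t : ℝ} (ht : t ∈ Set.Ioo (0:ℝ) 1) : ∀ n, Xi n t ∈ Set.Ioo (0:ℝ) 1 := by
  intro n
  induction n with
  | zero => exact ht
  | succ n ih =>
    have h1 : Real.log (Xi n t) < 0 := Real.log_neg ih.1 ih.2
    show X1 (Xi n t) ∈ Set.Ioo (0:ℝ) 1
    rw [X1]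
    exact ⟨inv_pos.2 (by linarith), inv_lt_one_of_one_lt₀ (by linarith)⟩

lemma Xi_le_Xi {x y : ℝ} (hx : x ∈ Set.Ioo (0:ℝ) 1) (hy : y ∈ Set.Ioo (0:ℝ) 1)
    (hxy : x ≤ y) : ∀ n, Xi n x ≤ Xi n y := by
  intro n
  induction n with
  | zero => exact hxy
  | succ n ih =>
    have hx' := Xi_mem hx n
    have hy' := Xi_mem hy n
    have hlog : Real.log (Xi n x) ≤ Real.log (Xi n y) := Real.log_le_log hx'.1 ih
    have h2 : 0 < 1 - Real.log (Xi n y) := by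
      have := Real.log_neg hy'.1 hy'.2; linarith
    show X1 (Xi n x) ≤ X1 (Xi n y)
    rw [X1, X1]
    exact inv_anti₀ h2 (by linarith)

lemma etaTerm_pos {t : ℝ} (ht : t ∈ Set.Ioo (0:ℝ) 1) (n : ℕ) : 0 < etaTerm t n :=
  Finset.prod_pos fun j _ => (Xi_mem ht (j+1)).1

lemma etaTerm_le_one {t : ℝ} (ht : t ∈ Set.Ioo (0:ℝ) 1) (n : ℕ) : etaTerm t n ≤ 1 :=
  Finset.prod_le_one (fun j _ => (Xi_mem ht (j+1)).1.le) (fun j _ => (Xi_mem ht (j+1)).2.le)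

lemma etaTerm_mono {x y : ℝ} (hx : x ∈ Set.Ioo (0:ℝ) 1) (hy : y ∈ Set.Ioo (0:ℝ) 1)
    (hxy : x ≤ y) (n : ℕ) : etaTerm x n ≤ etaTerm y n :=
  Finset.prod_le_prod (fun j _ => (Xi_mem hx (j+1)).1.le)
    (fun j _ => Xi_le_Xi hx hy hxy (j+1))

lemma etaTerm_succ (t : ℝ) (n : ℕ) : etaTerm t (n+1) = etaTerm t n * Xi (n+2) t :=
  Finset.prod_range_succ _ _

lemma zetaTerm_eq_sq (t : ℝ) (n : ℕ) : zetaTerm t n = etaTerm t n ^ 2 := by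
  rw [zetaTerm, etaTerm, ← Finset.prod_pow]

lemma thetaTerm_eq (t : ℝ) (i : ℕ) :
    thetaTerm t i = (∑ j ∈ Finset.range (i+1), etaTerm t j) * zetaTerm t i := by
  rw [thetaTerm, Finset.sum_mul]
  refine Finset.sum_congr rfl fun j hj => ?_
  have hj' : j + 1 ≤ i + 1 := Finset.mem_range.1 hj
  have h1 : (∏ l ∈ Finset.range (j+1), (Xi (l+1) t)^3)
      = etaTerm t j * ∏ l ∈ Finset.range (j+1), (Xi (l+1) t)^2 := by
    rw [etaTerm, ← Finset.prod_mul_distrib]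
    exact Finset.prod_congr rfl fun l _ => by ring
  rw [h1, mul_assoc, Finset.prod_range_mul_prod_Ico _ hj', zetaTerm]

/-- The Padé-type lower bound `log (1+x) ≥ 2x/(2+x)` for `x ≥ 0`. -/
lemma pade {x : ℝ} (hx : 0 ≤ x) : 2*x/(2+x) ≤ Real.log (1+x) := by
  have hd : ∀ y : ℝ, 0 ≤ y →
      HasDerivAt (fun z : ℝ => Real.log (1+z) - 2*z/(2+z))
        ((1+y)⁻¹ - (2*(2+y) - 2*y*1)/(2+y)^2) y := by
    intro y hy
    have h1 : HasDerivAt (fun z : ℝ => 1 + z) 1 y := by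
      simpa using (hasDerivAt_id y).const_add (1:ℝ)
    have h1' : (1:ℝ) + y ≠ 0 := by positivity
    have hl : HasDerivAt (fun z : ℝ => Real.log (1+z)) ((1+y)⁻¹) y := by
      exact ((Real.hasDerivAt_log h1').comp y h1).congr_deriv (mul_one _)
    have h2 : HasDerivAt (fun z : ℝ => 2*z) 2 y := by
      simpa using (hasDerivAt_id y).const_mul (2:ℝ)
    have h3 : HasDerivAt (fun z : ℝ => 2+z) 1 y := by
      simpa using (hasDerivAt_id y).const_add (2:ℝ)
    have h4 : (2:ℝ) + y ≠ 0 := by positivity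
    exact hl.sub (h2.div h3 h4)
  have mono : MonotoneOn (fun z : ℝ => Real.log (1+z) - 2*z/(2+z)) (Set.Ici 0) := by
    apply monotoneOn_of_deriv_nonneg (convex_Ici 0)
    · intro y hy
      exact ((hd y hy).continuousAt).continuousWithinAt
    · intro y hy
      rw [interior_Ici] at hy
      exact ((hd y (le_of_lt hy)).differentiableAt).differentiableWithinAt
    · intro y hy
      rw [interior_Ici] at hy
      rw [(hd y (le_of_lt hy)).deriv]
      have hy0 : (0:ℝ) < y := hy
      have h5 : (2*(2+y) - 2*y*1)/(2+y)^2 ≤ (1+y)⁻¹ := by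
        rw [inv_eq_one_div, div_le_div_iff₀ (by positivity) (by positivity)]
        nlinarith [sq_nonneg y]
      linarith
  have h0 := mono (Set.self_mem_Ici) (Set.mem_Ici.2 hx) hx
  simp only [Real.log_one, add_zero, mul_zero, zero_div, sub_zero] at h0
  have : Real.log (1+0) - 2*0/(2+0) = 0 := by norm_num
  nlinarith [h0, this]

lemma hasDerivAt_X1 {x : ℝ} (hx : x ∈ Set.Ioo (0:ℝ) 1) :
    HasDerivAt X1 (X1 x ^ 2 / x) x := by
  have hx0 : x ≠ 0 := ne_of_gt hx.1
  have hlog : Real.log x < 0 := Real.log_neg hx.1 hx.2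
  have hne : 1 - Real.log x ≠ 0 := by intro h; rw [sub_eq_zero] at h; linarith [h.symm]
  have h1 : HasDerivAt (fun y : ℝ => 1 - Real.log y) (-x⁻¹) x := by
    simpa using (Real.hasDerivAt_log hx0).const_sub (1:ℝ)
  have h2 : HasDerivAt X1 (-(-x⁻¹) / (1 - Real.log x)^2) x := h1.inv hne
  convert h2 using 1
  rw [X1]
  field_simp

lemma hasDerivAt_Xi {t : ℝ} (ht : t ∈ Set.Ioo (0:ℝ) 1) :
    ∀ n, HasDerivAt (fun y => Xi (n+1) y) (Xi (n+1) t * etaTerm t n / t) t := by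
  intro n
  induction n with
  | zero =>
    have h : HasDerivAt (fun y => Xi 1 y) (X1 t ^ 2 / t) t := hasDerivAt_X1 ht
    convert h using 1
    have : etaTerm t 0 = X1 t := by simp [etaTerm]; rfl
    rw [this]
    show Xi 1 t * X1 t / t = X1 t ^ 2 / t
    show X1 t * X1 t / t = X1 t ^ 2 / t
    ring
  | succ n ih =>
    have hXmem := Xi_mem ht (n+1)
    have hchain := (hasDerivAt_X1 hXmem).comp t ih
    have hc : HasDerivAt (fun y => Xi (n+2) y)
        (X1 (Xi (n+1) t) ^ 2 / Xi (n+1) t * (Xi (n+1) t * etaTerm t n / t)) t := hchain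
    convert hc using 1
    rw [etaTerm_succ]
    have hne : Xi (n+1) t ≠ 0 := ne_of_gt hXmem.1
    have ht0 : t ≠ 0 := ne_of_gt ht.1
    show Xi (n+2) t * (etaTerm t n * Xi (n+2) t) / t
        = X1 (Xi (n+1) t) ^ 2 / Xi (n+1) t * (Xi (n+1) t * etaTerm t n / t)
    have hX : Xi (n+2) t = X1 (Xi (n+1) t) := rfl
    rw [hX]
    field_simp

lemma hasDerivAt_etaTerm {t : ℝ} (ht : t ∈ Set.Ioo (0:ℝ) 1) :
    ∀ n, HasDerivAt (fun y => etaTerm y n)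
      (etaTerm t n * (∑ k ∈ Finset.range (n+1), etaTerm t k) / t) t := by
  intro n
  induction n with
  | zero =>
    have heq : (fun y => etaTerm y 0) = fun y => Xi 1 y := by
      funext y; simp [etaTerm]
    rw [heq]
    convert hasDerivAt_Xi ht 0 using 1
    rw [Finset.sum_range_one]
    have : etaTerm t 0 = Xi 1 t := by simp [etaTerm]
    rw [this]
  | succ n ih =>
    have heq : (fun y => etaTerm y (n+1)) = fun y => etaTerm y n * Xi (n+2) y := by
      funext y; exact etaTerm_succ y n
    rw [heq]
    have h := ih.mul (hasDerivAt_Xi ht (n+1))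
    refine h.congr_deriv (Eq.symm ?_)
    rw [Finset.sum_range_succ, etaTerm_succ]
    ring

lemma hasDerivAt_zetaTerm {t : ℝ} (ht : t ∈ Set.Ioo (0:ℝ) 1) (n : ℕ) :
    HasDerivAt (fun y => zetaTerm y n)
      (2 * zetaTerm t n * (∑ k ∈ Finset.range (n+1), etaTerm t k) / t) t := by
  have heq : (fun y => zetaTerm y n) = fun y => (etaTerm y n)^2 := by
    funext y; exact zetaTerm_eq_sq y n
  rw [heq]
  have h := (hasDerivAt_etaTerm ht n).pow 2
  refine h.congr_deriv ?_
  rw [zetaTerm_eq_sq]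
  push_cast
  ring

/-- The key quantitative estimate: `etaTerm t n` is bounded by a telescoping sequence. -/
lemma etaTerm_bound {t : ℝ} (ht : t ∈ Set.Ioo (0:ℝ) 1) :
    ∃ c : ℝ, 0 < c ∧ ∀ n : ℕ, etaTerm t n ≤
      (2*c)*(2*c+1) * (1/(2*c+(n:ℝ)+1) - 1/(2*c+(n:ℝ)+2)) := by
  obtain ⟨d, hd_pos, hXi_eq, hd_succ⟩ : ∃ d : ℕ → ℝ, (∀ n, 0 < d n) ∧
      (∀ n, Xi (n+1) t = (1 + d n)⁻¹) ∧ (∀ n, d (n+1) = Real.log (1 + d n)) := by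
    refine ⟨fun n => -Real.log (Xi n t), fun n => ?_, fun n => ?_, fun n => ?_⟩
    · have h := Xi_mem ht n
      have := Real.log_neg h.1 h.2
      simp only; linarith
    · show X1 (Xi n t) = _
      rw [X1]
      congr 1
    · have h := Xi_mem ht n
      have h1 : (0:ℝ) < 1 - Real.log (Xi n t) := by
        have := Real.log_neg h.1 h.2; linarith
      show -Real.log (Xi (n+1) t) = _
      have h2 : Xi (n+1) t = (1 + -Real.log (Xi n t))⁻¹ := by
        show X1 (Xi n t) = _
        rw [X1]; congr 1
      rw [h2, Real.log_inv]
      ring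
  have hrec : ∀ n, 1 / d (n+1) ≤ 1 / d n + 1/2 := by
    intro n
    have h0 := hd_pos n
    have hp : 2 * d n / (2 + d n) ≤ d (n+1) := by
      rw [hd_succ n]; exact pade h0.le
    have h1 : 0 < 2 * d n / (2 + d n) := by positivity
    calc 1 / d (n+1) ≤ 1 / (2 * d n / (2 + d n)) := one_div_le_one_div_of_le h1 hp
      _ = (2 + d n) / (2 * d n) := one_div_div _ _
      _ = 1 / d n + 1/2 := by
          rw [div_add_div _ _ (ne_of_gt h0) (two_ne_zero)]
          rw [div_eq_div_iff (by positivity) (by positivity)]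
          ring
  have hiter : ∀ n : ℕ, 1 / d n ≤ 1 / d 0 + (n:ℝ) / 2 := by
    intro n
    induction n with
    | zero => simp
    | succ n ih =>
      have := hrec n
      push_cast
      push_cast at ih
      linarith
  have hd00 : 0 < 1 / d 0 := one_div_pos.2 (hd_pos 0)
  obtain ⟨c, hc0, hcle⟩ : ∃ c : ℝ, 0 < c ∧ ∀ n : ℕ, 1 / d n ≤ c + (n:ℝ)/2 :=
    ⟨1 / d 0, hd00, hiter⟩
  refine ⟨c, hc0, ?_⟩
  have hXi_le : ∀ j : ℕ, Xi (j+1) t ≤ (2*c+(j:ℝ)) / (2*c+(j:ℝ)+2) := by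
    intro j
    have h0 := hd_pos j
    have h1 : 1 / d j ≤ c + (j:ℝ)/2 := hcle j
    have h2 : 0 < c + (j:ℝ)/2 := by positivity
    have h3 : 1 ≤ d j * (c + (j:ℝ)/2) := by
      have h4 := mul_le_mul_of_nonneg_left h1 h0.le
      rwa [mul_one_div, div_self (ne_of_gt h0)] at h4
    rw [hXi_eq j, inv_eq_one_div, div_le_div_iff₀ (by linarith) (by positivity)]
    nlinarith [h3]
  have hprod : ∀ m : ℕ, ∏ j ∈ Finset.range m, ((2*c+(j:ℝ)) / (2*c+(j:ℝ)+2))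
      = (2*c)*(2*c+1) / ((2*c+(m:ℝ))*(2*c+(m:ℝ)+1)) := by
    intro m
    induction m with
    | zero =>
      simp only [Finset.range_zero, Finset.prod_empty, Nat.cast_zero, add_zero]
      rw [eq_comm, div_eq_one_iff_eq (by positivity)]
    | succ m ih =>
      rw [Finset.prod_range_succ, ih]
      have e1 : (0:ℝ) < 2*c+(m:ℝ) := by positivity
      have e2 : (0:ℝ) < 2*c+(m:ℝ)+1 := by positivity
      have e3 : (0:ℝ) < 2*c+(m:ℝ)+2 := by positivity
      push_cast
      field_simp
      ring
  intro n
  have hb : etaTerm t n ≤ ∏ j ∈ Finset.range (n+1), ((2*c+(j:ℝ)) / (2*c+(j:ℝ)+2)) := by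
    rw [etaTerm]
    exact Finset.prod_le_prod (fun j _ => (Xi_mem ht (j+1)).1.le) (fun j _ => hXi_le j)
  rw [hprod (n+1)] at hb
  have e1 : (0:ℝ) < 2*c+(n:ℝ)+1 := by positivity
  have e2 : (0:ℝ) < 2*c+(n:ℝ)+2 := by positivity
  have heq2 : (2*c)*(2*c+1) / ((2*c+((n:ℝ)+1))*(2*c+((n:ℝ)+1)+1))
      = (2*c)*(2*c+1) * (1/(2*c+(n:ℝ)+1) - 1/(2*c+(n:ℝ)+2)) := by
    field_simp
    ring
  push_cast at hb
  calc etaTerm t n ≤ _ := hb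
    _ = _ := by rw [← heq2]

lemma etaTerm_summable {t : ℝ} (ht : t ∈ Set.Ioo (0:ℝ) 1) : Summable (etaTerm t) := by
  obtain ⟨c, hc, hle⟩ := etaTerm_bound ht
  set K := (2*c)*(2*c+1) with hK
  have hK0 : 0 ≤ K := by positivity
  apply summable_of_sum_range_le (c := K * (1/(2*c+1))) (fun n => (etaTerm_pos ht n).le)
  intro N
  have h1 : ∑ n ∈ Finset.range N, etaTerm t n
      ≤ ∑ n ∈ Finset.range N, K * (1/(2*c+(n:ℝ)+1) - 1/(2*c+(n:ℝ)+2)) :=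
    Finset.sum_le_sum fun n _ => hle n
  have h2 : ∑ n ∈ Finset.range N, K * (1/(2*c+(n:ℝ)+1) - 1/(2*c+(n:ℝ)+2))
      = K * (1/(2*c+1) - 1/(2*c+(N:ℝ)+1)) := by
    rw [← Finset.mul_sum]
    congr 1
    have h3 : ∀ n : ℕ, (1/(2*c+(n:ℝ)+1) - 1/(2*c+(n:ℝ)+2))
        = (fun m : ℕ => 1/(2*c+(m:ℝ)+1)) n - (fun m : ℕ => 1/(2*c+(m:ℝ)+1)) (n+1) := by
      intro n; push_cast; ring_nf
    calc ∑ n ∈ Finset.range N, (1/(2*c+(n:ℝ)+1) - 1/(2*c+(n:ℝ)+2))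
        = ∑ n ∈ Finset.range N,
          ((fun m : ℕ => 1/(2*c+(m:ℝ)+1)) n - (fun m : ℕ => 1/(2*c+(m:ℝ)+1)) (n+1)) :=
          Finset.sum_congr rfl fun n _ => h3 n
      _ = 1/(2*c+((0:ℕ):ℝ)+1) - 1/(2*c+(N:ℝ)+1) := by
          rw [Finset.sum_range_sub' (fun m : ℕ => 1/(2*c+(m:ℝ)+1)) N]
      _ = 1/(2*c+1) - 1/(2*c+(N:ℝ)+1) := by norm_num
  have h4 : (0:ℝ) ≤ 1/(2*c+(N:ℝ)+1) := by positivity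
  calc ∑ n ∈ Finset.range N, etaTerm t n ≤ K * (1/(2*c+1) - 1/(2*c+(N:ℝ)+1)) := by
        rw [← h2]; exact h1
    _ ≤ K * (1/(2*c+1)) := by nlinarith

end Aux

/-- Convergence of the series `η`, `ζ`, `θ` on `(0,1)`, together with the
differentiation formulas `η' = (η² + ζ)/(2t)` and `ζ' = 2θ/t` (formula (8) of the paper). -/
theorem eta_zeta_theta_summable_and_deriv (t : ℝ) (ht : t ∈ Set.Ioo (0:ℝ) 1) :
    Summable (etaTerm t) ∧ Summable (zetaTerm t) ∧ Summable (thetaTerm t) ∧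
    HasDerivAt eta ((eta t ^ 2 + zeta t) / (2 * t)) t ∧
    HasDerivAt zeta (2 * theta t / t) t := by
  obtain ⟨ht0, ht1⟩ := ht
  have ht' : t ∈ Set.Ioo (0:ℝ) 1 := ⟨ht0, ht1⟩
  have hEta : Summable (etaTerm t) := etaTerm_summable ht'
  have hzeta_le : ∀ {x : ℝ}, x ∈ Set.Ioo (0:ℝ) 1 → ∀ n, zetaTerm x n ≤ etaTerm x n := by
    intro x hx n
    rw [zetaTerm_eq_sq]
    have h1 := etaTerm_pos hx n
    have h2 := etaTerm_le_one hx n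
    nlinarith
  have hzeta_pos : ∀ {x : ℝ}, x ∈ Set.Ioo (0:ℝ) 1 → ∀ n, 0 < zetaTerm x n := by
    intro x hx n
    rw [zetaTerm_eq_sq]
    exact pow_pos (etaTerm_pos hx n) 2
  have hZeta : Summable (zetaTerm t) :=
    Summable.of_nonneg_of_le (fun n => (hzeta_pos ht' n).le) (fun n => hzeta_le ht' n) hEta
  -- the interval on which we get uniform bounds
  set a := t/2 with ha
  set b := (1+t)/2 with hb'
  have hb : b ∈ Set.Ioo (0:ℝ) 1 := ⟨by simp only [hb']; linarith, by simp only [hb']; linarith⟩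
  have hsub : Set.Ioo a b ⊆ Set.Ioo (0:ℝ) 1 := by
    intro x hx
    constructor
    · have : (0:ℝ) < a := by simp only [ha]; linarith
      linarith [hx.1]
    · have : b < 1 := hb.2
      linarith [hx.2]
  have htmem : t ∈ Set.Ioo a b := ⟨by simp only [ha]; linarith, by simp only [hb']; linarith⟩
  have ha0 : 0 < a := by simp only [ha]; linarith
  have hEb : Summable (etaTerm b) := etaTerm_summable hb
  set M := ∑' n, etaTerm b n with hM
  have hM_bound : ∀ x ∈ Set.Ioo a b, ∀ n : ℕ,
      ∑ k ∈ Finset.range (n+1), etaTerm x k ≤ M := by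
    intro x hx n
    calc ∑ k ∈ Finset.range (n+1), etaTerm x k
        ≤ ∑ k ∈ Finset.range (n+1), etaTerm b k :=
          Finset.sum_le_sum fun k _ => etaTerm_mono (hsub hx) hb hx.2.le k
      _ ≤ M := Summable.sum_le_tsum _ (fun k _ => (etaTerm_pos hb k).le) hEb
  have hM0 : 0 ≤ M := tsum_nonneg fun k => (etaTerm_pos hb k).le
  -- uniform summable bound for the eta derivatives
  set u : ℕ → ℝ := fun n => etaTerm b n * (M / a) with hu_def
  have hu : Summable u := hEb.mul_right _
  have hbound : ∀ (n : ℕ), ∀ y ∈ Set.Ioo a b,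
      ‖etaTerm y n * (∑ k ∈ Finset.range (n+1), etaTerm y k) / y‖ ≤ u n := by
    intro n y hy
    have hy' := hsub hy
    have hS0 : 0 ≤ ∑ k ∈ Finset.range (n+1), etaTerm y k :=
      Finset.sum_nonneg fun k _ => (etaTerm_pos hy' k).le
    have hy0 : 0 < y := hy'.1
    have hnum : 0 ≤ etaTerm y n * (∑ k ∈ Finset.range (n+1), etaTerm y k) :=
      mul_nonneg (etaTerm_pos hy' n).le hS0
    rw [Real.norm_eq_abs, abs_of_nonneg (div_nonneg hnum hy0.le)]
    have h1 : etaTerm y n ≤ etaTerm b n := etaTerm_mono hy' hb hy.2.le n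
    have h2 := hM_bound y hy n
    have h3 : etaTerm y n * (∑ k ∈ Finset.range (n+1), etaTerm y k) ≤ etaTerm b n * M :=
      mul_le_mul h1 h2 hS0 (etaTerm_pos hb n).le
    have hbM : 0 ≤ etaTerm b n * M := mul_nonneg (etaTerm_pos hb n).le hM0
    calc etaTerm y n * (∑ k ∈ Finset.range (n+1), etaTerm y k) / y
        ≤ etaTerm b n * M / a :=
          div_le_div₀ hbM h3 ha0 hy.1.le
      _ = u n := by rw [hu_def]; ring
  have hEtaDeriv := hasDerivAt_tsum_of_isPreconnected hu isOpen_Ioo isPreconnected_Ioo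
    (fun n y hy => hasDerivAt_etaTerm (hsub hy) n) hbound htmem hEta htmem
  -- partial sums at t
  set S : ℕ → ℝ := fun n => ∑ k ∈ Finset.range (n+1), etaTerm t k with hS_def
  have hS_nonneg : ∀ n, 0 ≤ S n := fun n =>
    Finset.sum_nonneg fun k _ => (etaTerm_pos ht' k).le
  have hf_sum : Summable (fun n => etaTerm t n * S n) := by
    apply Summable.of_nonneg_of_le
      (fun n => mul_nonneg (etaTerm_pos ht' n).le (hS_nonneg n))
      (fun n => ?_) (hEta.mul_right M)
    exact mul_le_mul_of_nonneg_left (hM_bound t htmem n) (etaTerm_pos ht' n).le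
  have hg_sum : Summable (fun n => zetaTerm t n * S n) := by
    apply Summable.of_nonneg_of_le
      (fun n => mul_nonneg (hzeta_pos ht' n).le (hS_nonneg n))
      (fun n => ?_) (hZeta.mul_right M)
    exact mul_le_mul_of_nonneg_left (hM_bound t htmem n) (hzeta_pos ht' n).le
  have hTheta : Summable (thetaTerm t) := by
    have heq : thetaTerm t = fun i => zetaTerm t i * S i := by
      funext i
      rw [thetaTerm_eq, hS_def]
      ring
    rw [heq]
    exact hg_sum
  -- the finite key identity
  have hkey : ∀ N, 2 * (∑ n ∈ Finset.range N, etaTerm t n * S n)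
      = (∑ n ∈ Finset.range N, etaTerm t n)^2 + ∑ n ∈ Finset.range N, zetaTerm t n := by
    intro N
    induction N with
    | zero => simp
    | succ N ihN =>
      rw [Finset.sum_range_succ, Finset.sum_range_succ (f := etaTerm t),
        Finset.sum_range_succ (f := zetaTerm t), zetaTerm_eq_sq]
      have hS' : S N = ∑ n ∈ Finset.range N, etaTerm t n + etaTerm t N :=
        Finset.sum_range_succ _ _
      rw [hS']
      linear_combination ihN
  have h2t : 2 * (∑' n, etaTerm t n * S n) = eta t ^ 2 + zeta t := by
    have hA : Filter.Tendsto (fun N => 2 * ∑ n ∈ Finset.range N, etaTerm t n * S n)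
        Filter.atTop (nhds (2 * ∑' n, etaTerm t n * S n)) :=
      (hf_sum.hasSum.tendsto_sum_nat).const_mul 2
    have hB : Filter.Tendsto
        (fun N => (∑ n ∈ Finset.range N, etaTerm t n)^2 + ∑ n ∈ Finset.range N, zetaTerm t n)
        Filter.atTop (nhds (eta t ^ 2 + zeta t)) := by
      have h1 : Filter.Tendsto (fun N => ∑ n ∈ Finset.range N, etaTerm t n)
          Filter.atTop (nhds (eta t)) := by
        rw [eta]
        exact hEta.hasSum.tendsto_sum_nat
      have h2 : Filter.Tendsto (fun N => ∑ n ∈ Finset.range N, zetaTerm t n)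
          Filter.atTop (nhds (zeta t)) := by
        rw [zeta]
        exact hZeta.hasSum.tendsto_sum_nat
      exact (h1.pow 2).add h2
    have hA' : Filter.Tendsto
        (fun N => (∑ n ∈ Finset.range N, etaTerm t n)^2 + ∑ n ∈ Finset.range N, zetaTerm t n)
        Filter.atTop (nhds (2 * ∑' n, etaTerm t n * S n)) := by
      have := hA
      simp only [hkey] at this
      exact this
    exact tendsto_nhds_unique hA' hB
  have hEtaDeriv' : HasDerivAt eta ((eta t ^ 2 + zeta t) / (2 * t)) t := by
    have hval : (∑' n, etaTerm t n * (∑ k ∈ Finset.range (n+1), etaTerm t k) / t)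
        = (eta t ^ 2 + zeta t) / (2 * t) := by
      rw [tsum_div_const]
      have hsame : (∑' n, etaTerm t n * (∑ k ∈ Finset.range (n+1), etaTerm t k))
          = ∑' n, etaTerm t n * S n := rfl
      rw [hsame]
      rw [show (∑' n, etaTerm t n * S n) = (eta t ^ 2 + zeta t) / 2 by linarith]
      rw [div_div]
    have hfin : HasDerivAt (fun z => ∑' n, etaTerm z n)
        ((eta t ^ 2 + zeta t) / (2 * t)) t := by
      rw [← hval]; exact hEtaDeriv
    exact hfin
  -- zeta derivative
  set u2 : ℕ → ℝ := fun n => 2 * u n with hu2_def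
  have hu2 : Summable u2 := hu.mul_left 2
  have hbound2 : ∀ (n : ℕ), ∀ y ∈ Set.Ioo a b,
      ‖2 * zetaTerm y n * (∑ k ∈ Finset.range (n+1), etaTerm y k) / y‖ ≤ u2 n := by
    intro n y hy
    have hy' := hsub hy
    have hS0 : 0 ≤ ∑ k ∈ Finset.range (n+1), etaTerm y k :=
      Finset.sum_nonneg fun k _ => (etaTerm_pos hy' k).le
    have hy0 : 0 < y := hy'.1
    have hz0 : 0 < zetaTerm y n := hzeta_pos hy' n
    have hnum : (0:ℝ) ≤ 2 * zetaTerm y n * (∑ k ∈ Finset.range (n+1), etaTerm y k) :=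
      mul_nonneg (by linarith) hS0
    rw [Real.norm_eq_abs, abs_of_nonneg (div_nonneg hnum hy0.le)]
    have h1 : zetaTerm y n ≤ etaTerm b n :=
      le_trans (hzeta_le hy' n) (etaTerm_mono hy' hb hy.2.le n)
    have h2 := hM_bound y hy n
    have h3 : zetaTerm y n * (∑ k ∈ Finset.range (n+1), etaTerm y k) ≤ etaTerm b n * M :=
      mul_le_mul h1 h2 hS0 (etaTerm_pos hb n).le
    calc 2 * zetaTerm y n * (∑ k ∈ Finset.range (n+1), etaTerm y k) / y
        = 2 * (zetaTerm y n * (∑ k ∈ Finset.range (n+1), etaTerm y k) / y) := by ring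
      _ ≤ 2 * (etaTerm b n * M / a) := by
          have hbM : 0 ≤ etaTerm b n * M := mul_nonneg (etaTerm_pos hb n).le hM0
          have := div_le_div₀ hbM h3 ha0 hy.1.le
          linarith
      _ = u2 n := by rw [hu2_def, hu_def]; ring
  have hZetaDeriv := hasDerivAt_tsum_of_isPreconnected hu2 isOpen_Ioo isPreconnected_Ioo
    (fun n y hy => hasDerivAt_zetaTerm (hsub hy) n) hbound2 htmem hZeta htmem
  have hZetaDeriv' : HasDerivAt zeta (2 * theta t / t) t := by
    have htheta : theta t = ∑' n, zetaTerm t n * S n := by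
      rw [theta]
      exact tsum_congr fun i => by rw [thetaTerm_eq, hS_def]; ring
    have hval2 : (∑' n, 2 * zetaTerm t n * (∑ k ∈ Finset.range (n+1), etaTerm t k) / t)
        = 2 * theta t / t := by
      calc (∑' n, 2 * zetaTerm t n * (∑ k ∈ Finset.range (n+1), etaTerm t k) / t)
          = ∑' n, (2/t) * (zetaTerm t n * S n) := tsum_congr fun n => by
            rw [hS_def]; ring
        _ = (2/t) * ∑' n, zetaTerm t n * S n := tsum_mul_left
        _ = 2 * theta t / t := by rw [← htheta]; ring
    have hfin2 : HasDerivAt (fun z => ∑' n, zetaTerm z n) (2 * theta t / t) t := by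
      rw [← hval2]; exact hZetaDeriv
    exact hfin2
  exact ⟨hEta, hZeta, hTheta, hEtaDeriv', hZetaDeriv'⟩
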